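/- Let λ > 0, x₁, x₂, y₁, y₂ ∈ ℝ with (x₂ − x₁)(y₁ − y₂) > 4λ, let m₁₁ > 0, m₂₂ ≥ m₁₁, m₁₂ ≥ 0, m₂₁ ≥ 0, and let A_{ij}, B_{ij} (i,j ∈ {1,2}) be n×n Hermitian positive semidefinite matrices with trace 1. Define Ã₁₂ = (m₁₁A₁₁ + m₁₂A₁₂)/(m₁₁+m₁₂), B̃₁₂ = (m₁₁B₂₂ + m₁₂B₁₂)/(m₁₁+m₁₂), Ã₂₁ = (m₁₁A₂₂ + m₂₁A₂₁)/(m₁₁+m₂₁), B̃₂₁ = (m₁₁B₁₁ + m₂₁B₂₁)/(m₁₁+m₂₁). Then: (a) the rearranged plan preserves marginals, i.e. (m₁₁+m₁₂)Ã₁₂ = m₁₁A₁₁ + m₁₂A₁₂, (m₁₁+m₂₁)Ã₂₁ = m₁₁A₂₂ + m₂₁A₂₁, (m₁₁+m₂₁)B̃₂₁ = m₁₁B₁₁ + m₂₁B₂₁, and (m₁₁+m₁₂)B̃₁₂ + (m₂₂−m₁₁)B₂₂ = m₁₂B₁₂ + m₂₂B₂₂; and (b) the cost strictly decreases: Σ_{i,j∈{1,2}}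 m_{ij}((x_i − y_j)² + λ‖A_{ij} − B_{ij}‖_F²) > (m₁₁+m₁₂)((x₁−y₂)² + λ‖Ã₁₂ − B̃₁₂‖_F²) + (m₁₁+m₂₁)((x₂−y₁)² + λ‖Ã₂₁ − B̃₂₁‖_F²) + (m₂₂−m₁₁)((x₂−y₂)² + λ‖A₂₂ − B₂₂‖_F²). -/

import Mathlib

open Matrix ComplexOrder

/-- The squared Frobenius norm of a complex matrix. -/
noncomputable def frobSq {n : ℕ} (M : Matrix (Fin n) (Fin n) ℂ) : ℝ :=
  ∑ i, ∑ j, ‖M i j‖ ^ 2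

lemma frobSq_nonneg {n : ℕ} (M : Matrix (Fin n) (Fin n) ℂ) : 0 ≤ frobSq M :=
  Finset.sum_nonneg fun _ _ => Finset.sum_nonneg fun _ _ => sq_nonneg _

open scoped MatrixOrder in
lemma entry_sq_le {n : ℕ} {A : Matrix (Fin n) (Fin n) ℂ} (hA : A.PosSemidef) (i j : Fin n) :
    ‖A i j‖ ^ 2 ≤ (A i i).re * (A j j).re := by
  set C := CFC.sqrt A with hC
  have hherm : Cᴴ = C := (CFC.sqrt_nonneg A).posSemidef.1
  have hCC : C * C = A := CFC.sqrt_mul_sqrt_self A hA.nonneg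
  set u : EuclideanSpace ℂ (Fin n) := (WithLp.equiv 2 (Fin n → ℂ)).symm fun k => C k i with hu
  set v : EuclideanSpace ℂ (Fin n) := (WithLp.equiv 2 (Fin n → ℂ)).symm fun k => C k j with hv
  have hinner : ∀ a b : Fin n, (inner ℂ ((WithLp.equiv 2 (Fin n → ℂ)).symm fun k => C k a) ((WithLp.equiv 2 (Fin n → ℂ)).symm fun k => C k b) : ℂ) = A a b := by
    intro a b
    rw [← hCC]
    simp only [PiLp.inner_apply, RCLike.inner_apply', Matrix.mul_apply]
    refine Finset.sum_congr rfl fun k _ => ?_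
    have hx : C a k = (starRingEnd ℂ) (C k a) := by
      conv_lhs => rw [← hherm]
      simp [Matrix.conjTranspose_apply]
    simp only [WithLp.equiv_symm_apply, PiLp.toLp_apply]
    rw [hx]
  have h1 : ‖A i j‖ ≤ ‖u‖ * ‖v‖ := by
    rw [← hinner i j]; exact norm_inner_le_norm u v
  have h2 : (A i i).re = ‖u‖ ^ 2 := by
    rw [← hinner i i]
    exact_mod_cast (inner_self_eq_norm_sq (𝕜 := ℂ) u)
  have h3 : (A j j).re = ‖v‖ ^ 2 := by
    rw [← hinner j j]
    exact_mod_cast (inner_self_eq_norm_sq (𝕜 := ℂ) v)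
  rw [h2, h3]
  nlinarith [norm_nonneg (A i j), norm_nonneg u, norm_nonneg v]

lemma frobSq_le_one {n : ℕ} {A : Matrix (Fin n) (Fin n) ℂ} (hA : A.PosSemidef)
    (hAt : A.trace = 1) : frobSq A ≤ 1 := by
  have h1 : frobSq A ≤ ∑ i, ∑ j, (A i i).re * (A j j).re :=
    Finset.sum_le_sum fun i _ => Finset.sum_le_sum fun j _ => entry_sq_le hA i j
  have h2 : ∑ i, ∑ j, (A i i).re * (A j j).re = (∑ i, (A i i).re) ^ 2 := by
    rw [sq, Finset.sum_mul_sum]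
  have h3 : (∑ i, (A i i).re) = 1 := by
    have := congrArg Complex.re hAt
    simpa [Matrix.trace, Matrix.diag, Complex.re_sum] using this
  rw [h2, h3] at h1; simpa using h1

lemma frobSq_sub_le_four {n : ℕ} {A B : Matrix (Fin n) (Fin n) ℂ}
    (hA : A.PosSemidef) (hB : B.PosSemidef) (hAt : A.trace = 1) (hBt : B.trace = 1) :
    frobSq (A - B) ≤ 4 := by
  have h : frobSq (A - B) ≤ 2 * frobSq A + 2 * frobSq B := by
    unfold frobSq
    rw [Finset.mul_sum, Finset.mul_sum, ← Finset.sum_add_distrib]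
    refine Finset.sum_le_sum fun i _ => ?_
    rw [Finset.mul_sum, Finset.mul_sum, ← Finset.sum_add_distrib]
    refine Finset.sum_le_sum fun j _ => ?_
    have := norm_sub_le (A i j) (B i j)
    simp only [Matrix.sub_apply]
    nlinarith [norm_nonneg (A i j), norm_nonneg (B i j), norm_nonneg (A i j - B i j),
      sq_nonneg (‖A i j‖ - ‖B i j‖), mul_self_le_mul_self (norm_nonneg (A i j - B i j)) this]
  have := frobSq_le_one hA hAt
  have := frobSq_le_one hB hBt
  linarith

lemma frobSq_convex {n : ℕ} (a b : ℝ) (ha : 0 ≤ a) (hb : 0 ≤ b) (hab : a + b = 1)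
    (M N : Matrix (Fin n) (Fin n) ℂ) :
    frobSq (a • M + b • N) ≤ a * frobSq M + b * frobSq N := by
  unfold frobSq
  rw [Finset.mul_sum, Finset.mul_sum, ← Finset.sum_add_distrib]
  refine Finset.sum_le_sum fun i _ => ?_
  rw [Finset.mul_sum, Finset.mul_sum, ← Finset.sum_add_distrib]
  refine Finset.sum_le_sum fun j _ => ?_
  simp only [Matrix.add_apply, Matrix.smul_apply]
  have h1 : ‖a • M i j + b • N i j‖ ≤ a * ‖M i j‖ + b * ‖N i j‖ := by
    refine (norm_add_le _ _).trans ?_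
    rw [norm_smul, norm_smul]
    simp [Real.norm_eq_abs, abs_of_nonneg ha, abs_of_nonneg hb]
  nlinarith [norm_nonneg (a • M i j + b • N i j), norm_nonneg (M i j), norm_nonneg (N i j),
    sq_nonneg (‖M i j‖ - ‖N i j‖), mul_nonneg ha hb]

lemma frobSq_comb_le {n : ℕ} (a b : ℝ) (ha : 0 < a) (hb : 0 ≤ b)
    (M N : Matrix (Fin n) (Fin n) ℂ) :
    (a + b) * frobSq (((a + b)⁻¹ : ℝ) • (a • M + b • N)) ≤ a * frobSq M + b * frobSq N := by
  have hc : 0 < a + b := by linarith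
  have hrw : ((a + b)⁻¹ : ℝ) • (a • M + b • N) = (a / (a + b)) • M + (b / (a + b)) • N := by
    rw [smul_add, smul_smul, smul_smul, div_eq_inv_mul, div_eq_inv_mul]
  rw [hrw]
  have := frobSq_convex (a / (a + b)) (b / (a + b)) (by positivity) (by positivity)
    (by field_simp) M N
  calc (a + b) * frobSq ((a / (a + b)) • M + (b / (a + b)) • N)
      ≤ (a + b) * ((a / (a + b)) * frobSq M + (b / (a + b)) * frobSq N) := by
        exact mul_le_mul_of_nonneg_left this hc.le
    _ = a * frobSq M + b * frobSq N := by field_simp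

theorem matrix_rearrangement_reduces_cost {n : ℕ}
    (lam : ℝ) (hlam : 0 < lam)
    (x₁ x₂ y₁ y₂ : ℝ) (h : (x₂ - x₁) * (y₁ - y₂) > 4 * lam)
    (m₁₁ m₁₂ m₂₁ m₂₂ : ℝ)
    (hm₁₁ : 0 < m₁₁) (hm₂₂ : m₁₁ ≤ m₂₂) (hm₁₂ : 0 ≤ m₁₂) (hm₂₁ : 0 ≤ m₂₁)
    (A₁₁ A₁₂ A₂₁ A₂₂ B₁₁ B₁₂ B₂₁ B₂₂ : Matrix (Fin n) (Fin n) ℂ)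
    (hA₁₁ : A₁₁.PosSemidef) (hA₁₂ : A₁₂.PosSemidef)
    (hA₂₁ : A₂₁.PosSemidef) (hA₂₂ : A₂₂.PosSemidef)
    (hB₁₁ : B₁₁.PosSemidef) (hB₁₂ : B₁₂.PosSemidef)
    (hB₂₁ : B₂₁.PosSemidef) (hB₂₂ : B₂₂.PosSemidef)
    (hA₁₁t : A₁₁.trace = 1) (hA₁₂t : A₁₂.trace = 1)
    (hA₂₁t : A₂₁.trace = 1) (hA₂₂t : A₂₂.trace = 1)
    (hB₁₁t : B₁₁.trace = 1) (hB₁₂t : B₁₂.trace = 1)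
    (hB₂₁t : B₂₁.trace = 1) (hB₂₂t : B₂₂.trace = 1)
    (tA₁₂ tB₁₂ tA₂₁ tB₂₁ : Matrix (Fin n) (Fin n) ℂ)
    (htA₁₂ : tA₁₂ = ((m₁₁ + m₁₂)⁻¹ : ℝ) • (m₁₁ • A₁₁ + m₁₂ • A₁₂))
    (htB₁₂ : tB₁₂ = ((m₁₁ + m₁₂)⁻¹ : ℝ) • (m₁₁ • B₂₂ + m₁₂ • B₁₂))
    (htA₂₁ : tA₂₁ = ((m₁₁ + m₂₁)⁻¹ : ℝ) • (m₁₁ • A₂₂ + m₂₁ • A₂₁))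
    (htB₂₁ : tB₂₁ = ((m₁₁ + m₂₁)⁻¹ : ℝ) • (m₁₁ • B₁₁ + m₂₁ • B₂₁)) :
    ((m₁₁ + m₁₂) • tA₁₂ = m₁₁ • A₁₁ + m₁₂ • A₁₂ ∧
     (m₁₁ + m₂₁) • tA₂₁ = m₁₁ • A₂₂ + m₂₁ • A₂₁ ∧
     (m₁₁ + m₂₁) • tB₂₁ = m₁₁ • B₁₁ + m₂₁ • B₂₁ ∧
     (m₁₁ + m₁₂) • tB₁₂ + (m₂₂ - m₁₁) • B₂₂ = m₁₂ • B₁₂ + m₂₂ • B₂₂) ∧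
    (m₁₁ * ((x₁ - y₁) ^ 2 + lam * frobSq (A₁₁ - B₁₁)) +
       m₁₂ * ((x₁ - y₂) ^ 2 + lam * frobSq (A₁₂ - B₁₂)) +
       m₂₁ * ((x₂ - y₁) ^ 2 + lam * frobSq (A₂₁ - B₂₁)) +
       m₂₂ * ((x₂ - y₂) ^ 2 + lam * frobSq (A₂₂ - B₂₂)) >
     (m₁₁ + m₁₂) * ((x₁ - y₂) ^ 2 + lam * frobSq (tA₁₂ - tB₁₂)) +
       (m₁₁ + m₂₁) * ((x₂ - y₁) ^ 2 + lam * frobSq (tA₂₁ - tB₂₁)) +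
       (m₂₂ - m₁₁) * ((x₂ - y₂) ^ 2 + lam * frobSq (A₂₂ - B₂₂))) := by
  have hc12 : (0:ℝ) < m₁₁ + m₁₂ := by linarith
  have hc21 : (0:ℝ) < m₁₁ + m₂₁ := by linarith
  constructor
  · refine ⟨?_, ?_, ?_, ?_⟩
    · rw [htA₁₂, smul_smul, mul_inv_cancel₀ hc12.ne', one_smul]
    · rw [htA₂₁, smul_smul, mul_inv_cancel₀ hc21.ne', one_smul]
    · rw [htB₂₁, smul_smul, mul_inv_cancel₀ hc21.ne', one_smul]
    · rw [htB₁₂, smul_smul, mul_inv_cancel₀ hc12.ne', one_smul]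
      module
  · have hd12 : tA₁₂ - tB₁₂ = ((m₁₁ + m₁₂)⁻¹ : ℝ) • (m₁₁ • (A₁₁ - B₂₂) + m₁₂ • (A₁₂ - B₁₂)) := by
      rw [htA₁₂, htB₁₂, ← smul_sub]
      congr 1
      module
    have hd21 : tA₂₁ - tB₂₁ = ((m₁₁ + m₂₁)⁻¹ : ℝ) • (m₁₁ • (A₂₂ - B₁₁) + m₂₁ • (A₂₁ - B₂₁)) := by
      rw [htA₂₁, htB₂₁, ← smul_sub]
      congr 1
      module
    have key12 : (m₁₁ + m₁₂) * frobSq (tA₁₂ - tB₁₂) ≤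
        m₁₁ * frobSq (A₁₁ - B₂₂) + m₁₂ * frobSq (A₁₂ - B₁₂) := by
      rw [hd12]; exact frobSq_comb_le m₁₁ m₁₂ hm₁₁ hm₁₂ _ _
    have key21 : (m₁₁ + m₂₁) * frobSq (tA₂₁ - tB₂₁) ≤
        m₁₁ * frobSq (A₂₂ - B₁₁) + m₂₁ * frobSq (A₂₁ - B₂₁) := by
      rw [hd21]; exact frobSq_comb_le m₁₁ m₂₁ hm₁₁ hm₂₁ _ _
    have hF1 : frobSq (A₁₁ - B₂₂) ≤ 4 := frobSq_sub_le_four hA₁₁ hB₂₂ hA₁₁t hB₂₂t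
    have hF2 : frobSq (A₂₂ - B₁₁) ≤ 4 := frobSq_sub_le_four hA₂₂ hB₁₁ hA₂₂t hB₁₁t
    have hS11 := frobSq_nonneg (A₁₁ - B₁₁)
    have hS22 := frobSq_nonneg (A₂₂ - B₂₂)
    have hlm : 0 ≤ lam * m₁₁ := by positivity
    nlinarith [mul_le_mul_of_nonneg_left key12 hlam.le,
      mul_le_mul_of_nonneg_left key21 hlam.le,
      mul_le_mul_of_nonneg_left hF1 hlm,
      mul_le_mul_of_nonneg_left hF2 hlm,
      mul_nonneg hlm hS11, mul_nonneg hlm hS22,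
      mul_lt_mul_of_pos_left h hm₁₁]
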